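/- Let (x_t)_{t≥0} be a sequence of real numbers, let c_x > 0 and c_− > 0 be real numbers, and let t_0 be a natural number. Suppose x_0 > 0, that 0 < x_t < c_x for all t < t_0, that x_{t_0} ≥ c_x, and that x_t ≥ x_{t−1} + c_−·x_{t−1}² for all t with 1 ≤ t ≤ t_0. Then t_0 ≤ (1 + c_−·c_x)/(c_−·x_0). -/
import Mathlib


/-- **Part (iii) of the recursive-sequence lemma: crossing-time upper bound.**
If `0 < x t < c_x` for all `t < t₀`, `x t₀ ≥ c_x`, and the increments are at
least quadratic, `x t ≥ x (t-1) + c₋ · x (t-1)²` for `1 ≤ t ≤ t₀`, then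
`t₀ ≤ (1 + c₋ c_x) / (c₋ x 0)`. -/
theorem crossing_time_upper_bound
    (x : ℕ → ℝ) (cx cm : ℝ) (hcx : 0 < cx) (hcm : 0 < cm) (t₀ : ℕ)
    (hx0 : 0 < x 0)
    (hbefore : ∀ t : ℕ, t < t₀ → 0 < x t ∧ x t < cx)
    (hcross : cx ≤ x t₀)
    (hrec : ∀ t : ℕ, 1 ≤ t → t ≤ t₀ → x (t - 1) + cm * x (t - 1) ^ 2 ≤ x t) :
    (t₀ : ℝ) ≤ (1 + cm * cx) / (cm * x 0) := by
  have hden : (0:ℝ) < 1 + cm * cx := by positivity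
  set K : ℝ := cm / (1 + cm * cx) with hK
  have hKpos : 0 < K := by positivity
  have hpos : ∀ t, t ≤ t₀ → 0 < x t := by
    intro t ht
    rcases lt_or_eq_of_le ht with h | h
    · exact (hbefore t h).1
    · subst h; exact hcx.trans_le hcross
  have key : ∀ t, t ≤ t₀ → (t : ℝ) * K + 1 / x t ≤ 1 / x 0 := by
    intro t
    induction t with
    | zero => intro _; simp
    | succ s ih =>
      intro hs
      have hs' : s ≤ t₀ := Nat.le_of_succ_le hs
      have hslt : s < t₀ := hs
      have hxs : 0 < x s := (hbefore s hslt).1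
      have hxscx : x s < cx := (hbefore s hslt).2
      have hrec' := hrec (s+1) (Nat.le_add_left 1 s) hs
      simp only [Nat.add_sub_cancel] at hrec'
      have hxs1 : 0 < x (s+1) := hpos (s+1) hs
      -- step : 1/x s - 1/x (s+1) ≥ K
      have hstep : K + 1 / x (s+1) ≤ 1 / x s := by
        have h1 : x s * (1 + cm * x s) ≤ x (s+1) := by nlinarith
        have hb : 0 < 1 + cm * x s := by positivity
        have h2 : 1 / x (s+1) ≤ 1 / (x s * (1 + cm * x s)) := by
          apply one_div_le_one_div_of_le (by positivity) h1
        have h3 : 1 / (x s * (1 + cm * x s)) = 1 / x s - cm / (1 + cm * x s) := by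
          field_simp
          ring
        have h4 : K ≤ cm / (1 + cm * x s) := by
          rw [hK]
          gcongr
        linarith [h2, h4, h3 ▸ h2]
      have := ih hs'
      push_cast
      nlinarith [hstep, this]
  have hxt₀ : 0 < x t₀ := hcx.trans_le hcross
  have h := key t₀ le_rfl
  have h1 : (t₀ : ℝ) * K ≤ 1 / x 0 := by
    have : 0 < 1 / x t₀ := by positivity
    linarith
  have e1 : (1 / x 0) * x 0 = 1 := by field_simp
  have e2 : K * (1 + cm * cx) = cm := by rw [hK]; field_simp
  rw [le_div_iff₀ (by positivity)]
  nlinarith [mul_le_mul_of_nonneg_right h1 (le_of_lt hx0), e1, e2,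
    mul_le_mul_of_nonneg_right (mul_le_mul_of_nonneg_right h1 (le_of_lt hx0)) (le_of_lt hden)]
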